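/- Fix dimensions d, m and constants K, θ, C ≥ 0. Let A ⊆ ℝ^m be nonempty, let M : ℝ^d → ℝ^d be a linear map, let a : ℝ^d → A, b : A → ℝ^d, f : A → ℝ satisfy: ‖a(z) − a(z')‖ ≤ √θ‖z − z'‖ for all z, z' ∈ ℝ^d; ‖b(p) − b(q)‖ ≤ √θ‖p − q‖ for all p, q ∈ A; |⟨b(p), M w⟩| ≤ K‖w‖ for all p ∈ A and w ∈ ℝ^d; |f(p) − f(q)| ≤ √θ‖p − q‖ for all p, q ∈ A. Define F(z, Z) := ⟨b(a(z)), M Z⟩ + f(a(z)) for z, Z ∈ ℝ^d. Then for all Z, z', Z' ∈ ℝ^d with ‖M Z‖ ≤ C one has |F(Z, Z) − F(z', Z')| ≤ (Cθ + θ)‖Z − z'‖ + K‖Z − Z'‖. -/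

import Mathlib

/-- Estimate (4.5): Lipschitz bound for the two-argument BSDE generator of the
policy improvement algorithm, with the coefficients frozen at a point. -/
theorem stmt_3 {d m : ℕ} (K θ C : ℝ) (hK : 0 ≤ K) (hθ : 0 ≤ θ) (hC : 0 ≤ C)
    (A : Set (EuclideanSpace ℝ (Fin m))) (hA : A.Nonempty)
    (M : EuclideanSpace ℝ (Fin d) →ₗ[ℝ] EuclideanSpace ℝ (Fin d))
    (a : EuclideanSpace ℝ (Fin d) → EuclideanSpace ℝ (Fin m))
    (b : EuclideanSpace ℝ (Fin m) → EuclideanSpace ℝ (Fin d))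
    (f : EuclideanSpace ℝ (Fin m) → ℝ)
    (haA : ∀ z, a z ∈ A)
    (ha : ∀ z z' : EuclideanSpace ℝ (Fin d), ‖a z - a z'‖ ≤ Real.sqrt θ * ‖z - z'‖)
    (hb : ∀ p ∈ A, ∀ q ∈ A, ‖b p - b q‖ ≤ Real.sqrt θ * ‖p - q‖)
    (hbM : ∀ p ∈ A, ∀ w : EuclideanSpace ℝ (Fin d), |(inner ℝ (b p) (M w) : ℝ)| ≤ K * ‖w‖)
    (hf : ∀ p ∈ A, ∀ q ∈ A, |f p - f q| ≤ Real.sqrt θ * ‖p - q‖)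
    (F : EuclideanSpace ℝ (Fin d) → EuclideanSpace ℝ (Fin d) → ℝ)
    (hF : ∀ z Z, F z Z = (inner ℝ (b (a z)) (M Z) : ℝ) + f (a z)) :
    ∀ Z z' Z' : EuclideanSpace ℝ (Fin d), ‖M Z‖ ≤ C →
      |F Z Z - F z' Z'| ≤ (C * θ + θ) * ‖Z - z'‖ + K * ‖Z - Z'‖ := by
  intro Z z' Z' hMZ
  have hsq : Real.sqrt θ * Real.sqrt θ = θ := Real.mul_self_sqrt hθ
  have key : F Z Z - F z' Z' =
      (inner ℝ (b (a Z) - b (a z')) (M Z) : ℝ)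
      + (inner ℝ (b (a z')) (M (Z - Z')) : ℝ) + (f (a Z) - f (a z')) := by
    rw [hF, hF, inner_sub_left, map_sub, inner_sub_right]
    ring
  rw [key]
  have h1 : |(inner ℝ (b (a Z) - b (a z')) (M Z) : ℝ)| ≤ C * θ * ‖Z - z'‖ := by
    calc |(inner ℝ (b (a Z) - b (a z')) (M Z) : ℝ)| ≤ ‖b (a Z) - b (a z')‖ * ‖M Z‖ :=
          abs_real_inner_le_norm _ _
      _ ≤ (Real.sqrt θ * (Real.sqrt θ * ‖Z - z'‖)) * C := by
          apply mul_le_mul _ hMZ (norm_nonneg _) (by positivity)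
          exact le_trans (hb _ (haA Z) _ (haA z'))
            (mul_le_mul_of_nonneg_left (ha Z z') (Real.sqrt_nonneg θ))
      _ = C * θ * ‖Z - z'‖ := by rw [← mul_assoc, hsq]; ring
  have h2 : |(inner ℝ (b (a z')) (M (Z - Z')) : ℝ)| ≤ K * ‖Z - Z'‖ := hbM _ (haA z') _
  have h3 : |f (a Z) - f (a z')| ≤ θ * ‖Z - z'‖ := by
    calc |f (a Z) - f (a z')| ≤ Real.sqrt θ * ‖a Z - a z'‖ := hf _ (haA Z) _ (haA z')
      _ ≤ Real.sqrt θ * (Real.sqrt θ * ‖Z - z'‖) :=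
          mul_le_mul_of_nonneg_left (ha Z z') (Real.sqrt_nonneg θ)
      _ = θ * ‖Z - z'‖ := by rw [← mul_assoc, hsq]
  calc |(inner ℝ (b (a Z) - b (a z')) (M Z) : ℝ)
        + (inner ℝ (b (a z')) (M (Z - Z')) : ℝ) + (f (a Z) - f (a z'))|
      ≤ |(inner ℝ (b (a Z) - b (a z')) (M Z) : ℝ)
        + (inner ℝ (b (a z')) (M (Z - Z')) : ℝ)| + |f (a Z) - f (a z')| := abs_add_le _ _
    _ ≤ |(inner ℝ (b (a Z) - b (a z')) (M Z) : ℝ)|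
        + |(inner ℝ (b (a z')) (M (Z - Z')) : ℝ)| + |f (a Z) - f (a z')| := by
          gcongr; exact abs_add_le _ _
    _ ≤ C * θ * ‖Z - z'‖ + K * ‖Z - Z'‖ + θ * ‖Z - z'‖ := by gcongr
    _ = (C * θ + θ) * ‖Z - z'‖ + K * ‖Z - Z'‖ := by ring
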